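/- Let (ρ₁,ρ₂) be density matrices on ℂ^n and (ρ₁′,ρ₂′) be density matrices on ℂ^m with ρ₁′ ≠ ρ₂′ and supp(ρ₁′) ⊆ supp(ρ₂′), and set M′ := inf{ λ : λρ₂′ − ρ₁′ ≥ 0 }, m′ := sup{ λ : ρ₁′ − λρ₂′ ≥ 0 }, M := inf{ λ : λρ₂ − ρ₁ ≥ 0 } (possibly +∞), m := sup{ λ : ρ₁ − λρ₂ ≥ 0 }. For q > 0, define P_max(q) := max{ Tr[(E+F)ρ₁] : E, F ≥ 0, E+F ≤ 𝟙ₙ, Tr[(E+F)(qρ₂ − ρ₁)] = 0, Tr[E(ρ₁ − qM′ρ₂)] ≥ 0, Tr[F(qm′ρ₂ − ρ₁)] ≥ 0 }. If P_max(q) > 0, then m ≤ q·m′ and q·M′ ≤ M (i.e., m/m′ ≤ q ≤ M/M′). -/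

import Mathlib

open scoped ComplexOrder ENNReal

section PmaxHelpers
open Matrix Complex

variable {k : ℕ}

lemma quad_conj {M : Matrix (Fin k) (Fin k) ℂ} (hM : M.IsHermitian) (x : Fin k → ℂ) :
    star x ⬝ᵥ M *ᵥ x = (((star x ⬝ᵥ M *ᵥ x).re : ℝ) : ℂ) := by
  rw [eq_comm, ← Complex.conj_eq_iff_re]
  show star (star x ⬝ᵥ M *ᵥ x) = star x ⬝ᵥ M *ᵥ x
  have h2 : star x ⬝ᵥ M *ᵥ x = star (star (M *ᵥ x) ⬝ᵥ x) := star_dotProduct x (M *ᵥ x)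
  conv_lhs => rw [h2, star_star, star_mulVec, ← dotProduct_mulVec, hM.eq]

lemma psd_iff_re {M : Matrix (Fin k) (Fin k) ℂ} (hM : M.IsHermitian) :
    M.PosSemidef ↔ ∀ x : Fin k → ℂ, 0 ≤ (star x ⬝ᵥ M *ᵥ x).re := by
  constructor
  · intro h x
    exact (Complex.le_def.mp (h.dotProduct_mulVec_nonneg x)).1
  · intro h
    refine Matrix.PosSemidef.of_dotProduct_mulVec_nonneg hM fun x => ?_
    rw [quad_conj hM x]
    exact_mod_cast Complex.zero_le_real.mpr (h x)

lemma diag_quad (M : Matrix (Fin k) (Fin k) ℂ) (i : Fin k) :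
    star (Pi.single i (1:ℂ)) ⬝ᵥ M *ᵥ (Pi.single i (1:ℂ)) = M i i := by
  have hs : star (Pi.single i (1:ℂ) : Fin k → ℂ) = Pi.single i (1:ℂ) := by
    funext j
    rw [Pi.star_apply, Pi.single_apply]
    split <;> simp
  rw [hs, mulVec_single, single_dotProduct]
  simp

lemma psd_diag_nonneg {M : Matrix (Fin k) (Fin k) ℂ} (hM : M.PosSemidef) (i : Fin k) :
    0 ≤ M i i := by
  have := hM.dotProduct_mulVec_nonneg (Pi.single i 1)
  rwa [diag_quad] at this

lemma psd_trace_nonneg {M : Matrix (Fin k) (Fin k) ℂ} (hM : M.PosSemidef) :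
    0 ≤ M.trace :=
  Finset.sum_nonneg fun i _ => psd_diag_nonneg hM i

lemma psd_trace_zero {M : Matrix (Fin k) (Fin k) ℂ} (hM : M.PosSemidef)
    (ht : M.trace = 0) : M = 0 := by
  have hd : ∀ i, M i i = 0 := by
    have := (Finset.sum_eq_zero_iff_of_nonneg
      (fun i _ => psd_diag_nonneg hM i)).mp ht
    exact fun i => this i (Finset.mem_univ i)
  have hcol : ∀ i, M *ᵥ Pi.single i (1:ℂ) = 0 := by
    intro i
    rw [← hM.dotProduct_mulVec_zero_iff, diag_quad]
    exact hd i
  ext j i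
  have := congrFun (hcol i) j
  simpa [mulVec_single] using this

lemma trace_mul_psd_nonneg {A B : Matrix (Fin k) (Fin k) ℂ}
    (hA : A.PosSemidef) (hB : B.PosSemidef) : 0 ≤ (A * B).trace := by
  obtain ⟨a, rfl⟩ : ∃ a : Matrix (Fin k) (Fin k) ℂ, A = aᴴ * a := by
    open scoped MatrixOrder Matrix.Norms.L2Operator in
    exact CStarAlgebra.nonneg_iff_eq_star_mul_self.mp hA.nonneg
  obtain ⟨b, rfl⟩ : ∃ b : Matrix (Fin k) (Fin k) ℂ, B = bᴴ * b := by
    open scoped MatrixOrder Matrix.Norms.L2Operator in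
    exact CStarAlgebra.nonneg_iff_eq_star_mul_self.mp hB.nonneg
  have h1 : (aᴴ * a * (bᴴ * b)).trace = ((b * aᴴ)ᴴ * (b * aᴴ)).trace := by
    rw [conjTranspose_mul, conjTranspose_conjTranspose]
    simp only [Matrix.mul_assoc]
    rw [trace_mul_comm]
    simp only [Matrix.mul_assoc]
  rw [h1]
  exact psd_trace_nonneg (posSemidef_conjTranspose_mul_self _)


lemma quad_unitary_diag (U : Matrix (Fin k) (Fin k) ℂ) (d : Fin k → ℝ) (x : Fin k → ℂ) :
    star x ⬝ᵥ ((U * diagonal (fun i => (d i : ℂ)) * star U) *ᵥ x)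
      = ((∑ i, d i * Complex.normSq ((star U *ᵥ x) i) : ℝ) : ℂ) := by
  set y := star U *ᵥ x with hy
  have h1 : (U * diagonal (fun i => (d i : ℂ)) * star U) *ᵥ x
      = U *ᵥ (diagonal (fun i => (d i : ℂ)) *ᵥ y) := by
    rw [hy, mulVec_mulVec, mulVec_mulVec, Matrix.mul_assoc]
  have h2 : star x ᵥ* U = star y := by
    rw [hy, star_mulVec, star_eq_conjTranspose, conjTranspose_conjTranspose]
  rw [h1, dotProduct_mulVec, h2]
  simp only [dotProduct, Pi.star_apply, mulVec_diagonal]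
  push_cast
  refine Finset.sum_congr rfl fun i _ => ?_
  rw [Complex.normSq_eq_conj_mul_self, Complex.star_def]
  ring

lemma exists_smul_sub_psd {A B : Matrix (Fin k) (Fin k) ℂ}
    (hA : A.PosSemidef) (hB : B.PosSemidef)
    (hker : ∀ x, B *ᵥ x = 0 → A *ᵥ x = 0) :
    ∃ c : ℝ, (((c : ℝ) : ℂ) • B - A).PosSemidef := by
  classical
  set μ : Fin k → ℝ := hB.1.eigenvalues with hμdef
  set U : Matrix (Fin k) (Fin k) ℂ := (hB.1.eigenvectorUnitary : Matrix (Fin k) (Fin k) ℂ)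
    with hUdef
  have hUU : U * star U = 1 := mem_unitaryGroup_iff.mp (hB.1.eigenvectorUnitary).2
  have hUU' : star U * U = 1 := mem_unitaryGroup_iff'.mp (hB.1.eigenvectorUnitary).2
  have hspecB : B = U * diagonal (fun i => (μ i : ℂ)) * star U := hB.1.spectral_theorem
  set ν : Fin k → ℝ := hA.1.eigenvalues with hνdef
  set V : Matrix (Fin k) (Fin k) ℂ := (hA.1.eigenvectorUnitary : Matrix (Fin k) (Fin k) ℂ)
    with hVdef
  have hVV : V * star V = 1 := mem_unitaryGroup_iff.mp (hA.1.eigenvectorUnitary).2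
  have hspecA : A = V * diagonal (fun i => (ν i : ℂ)) * star V := hA.1.spectral_theorem
  by_cases hs : (Finset.univ.filter fun i => μ i ≠ 0).Nonempty
  case neg =>
    have hμ0 : ∀ i, μ i = 0 := by
      intro i
      by_contra h
      exact hs ⟨i, Finset.mem_filter.mpr ⟨Finset.mem_univ i, h⟩⟩
    have hB0 : B = 0 := by
      rw [hspecB]
      have h0 : (diagonal fun i => ((μ i : ℝ) : ℂ)) = 0 := by
        ext i j
        by_cases h : i = j <;> simp [diagonal_apply, h, hμ0]
      rw [h0, Matrix.mul_zero, Matrix.zero_mul]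
    have hA0 : A = 0 := by
      ext i j
      have h0 : A *ᵥ Pi.single j 1 = 0 := hker _ (by rw [hB0, zero_mulVec])
      have := congrFun h0 i
      simpa [mulVec_single] using this
    refine ⟨0, ?_⟩
    have : (((0:ℝ):ℂ)) • B - A = 0 := by rw [hA0]; simp
    rw [this]
    exact Matrix.PosSemidef.zero
  case pos =>
    set s := Finset.univ.filter fun i => μ i ≠ 0 with hsdef
    set δ := s.inf' hs μ with hδdef
    have hδpos : 0 < δ := by
      rw [hδdef, Finset.lt_inf'_iff]
      intro i hi
      have h1 : μ i ≠ 0 := (Finset.mem_filter.mp hi).2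
      have h2 : 0 ≤ μ i := hB.eigenvalues_nonneg i
      exact lt_of_le_of_ne h2 (Ne.symm h1)
    set C := ∑ i, ν i with hCdef
    have hν0 : ∀ i, 0 ≤ ν i := fun i => hA.eigenvalues_nonneg i
    have hC0 : 0 ≤ C := Finset.sum_nonneg fun i _ => hν0 i
    have hνC : ∀ i, ν i ≤ C := fun i =>
      Finset.single_le_sum (fun j _ => hν0 j) (Finset.mem_univ i)
    set ind : Fin k → ℝ := fun i => if μ i = 0 then 0 else 1 with hinddef
    set P := U * diagonal (fun i => (ind i : ℂ)) * star U with hPdef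
    have hdiagmul : ∀ d e : Fin k → ℝ,
        (U * diagonal (fun i => (d i:ℂ)) * star U) * (U * diagonal (fun i => (e i:ℂ)) * star U)
          = U * diagonal (fun i => ((d i * e i : ℝ) : ℂ)) * star U := by
      intro d e
      have hfe : (fun i => ((d i * e i : ℝ):ℂ)) = fun i => (d i:ℂ) * (e i:ℂ) := by
        funext i; push_cast; ring
      rw [hfe, ← diagonal_mul_diagonal]
      simp only [Matrix.mul_assoc]
      rw [← Matrix.mul_assoc (star U) U, hUU', Matrix.one_mul]
    have hP2 : P * P = P := by
      rw [hPdef, hdiagmul]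
      have h0 : (fun i => ((ind i * ind i : ℝ):ℂ)) = fun i => (ind i : ℂ) := by
        funext i
        by_cases h : μ i = 0 <;> simp [hinddef, h]
      rw [h0]
    have hPH : Pᴴ = P := by
      rw [hPdef, conjTranspose_mul, conjTranspose_mul, diagonal_conjTranspose]
      rw [← star_eq_conjTranspose, ← star_eq_conjTranspose, star_star]
      have h0 : (star (fun i => (ind i : ℂ))) = fun i => (ind i : ℂ) := by
        funext i
        simp [Complex.star_def, Complex.conj_ofReal]
      rw [h0, Matrix.mul_assoc]
    have hBP : B * P = B := by
      rw [hspecB, hPdef, hdiagmul]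
      have h0 : (fun i => ((μ i * ind i : ℝ):ℂ)) = fun i => (μ i : ℂ) := by
        funext i
        by_cases h : μ i = 0 <;> simp [hinddef, h]
      rw [h0]
    have hAP : A * P = A := by
      have h0 : A * (1 - P) = 0 := by
        ext i j
        have hx : B *ᵥ ((1 - P) *ᵥ Pi.single j 1) = 0 := by
          rw [mulVec_mulVec, Matrix.mul_sub, Matrix.mul_one, hBP, sub_self, zero_mulVec]
        have hax := hker _ hx
        rw [mulVec_mulVec] at hax
        have := congrFun hax i
        simpa [mulVec_single] using this
      rw [Matrix.mul_sub, Matrix.mul_one] at h0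
      have := sub_eq_zero.mp h0
      exact this.symm
    have hPA : P * A = A := by
      calc P * A = Pᴴ * Aᴴ := by rw [hPH, hA.1.eq]
        _ = (A * P)ᴴ := (conjTranspose_mul A P).symm
        _ = A := by rw [hAP, hA.1.eq]
    refine ⟨C / δ, ?_⟩
    have hH : ((((C/δ : ℝ)):ℂ) • B - A).IsHermitian := by
      unfold Matrix.IsHermitian
      rw [conjTranspose_sub, conjTranspose_smul, hB.1.eq, hA.1.eq, Complex.star_def,
        Complex.conj_ofReal]
    rw [psd_iff_re hH]
    intro x
    have hexp : star x ⬝ᵥ ((((C/δ : ℝ)):ℂ) • B - A) *ᵥ x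
        = ((C/δ : ℝ):ℂ) * (star x ⬝ᵥ B *ᵥ x) - star x ⬝ᵥ A *ᵥ x := by
      rw [sub_mulVec, dotProduct_sub, smul_mulVec, dotProduct_smul, smul_eq_mul]
    set u := P *ᵥ x with hudef
    set y := star U *ᵥ x with hydef
    set z := star V *ᵥ u with hzdef
    have hstaru : star u = star x ᵥ* P := by
      rw [hudef, star_mulVec, hPH]
    have hqA : star u ⬝ᵥ A *ᵥ u = star x ⬝ᵥ A *ᵥ x := by
      rw [hstaru, ← dotProduct_mulVec, hudef, mulVec_mulVec, mulVec_mulVec, hPA, hAP]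
    have hzsum : star u ⬝ᵥ A *ᵥ u = ((∑ i, ν i * normSq (z i) : ℝ) : ℂ) := by
      conv_lhs => rw [hspecA]
      rw [quad_unitary_diag]
    have hVDV : V * diagonal (fun _ : Fin k => (((1:ℝ)) : ℂ)) * star V = 1 := by
      have h0 : diagonal (fun _ : Fin k => ((1:ℝ):ℂ)) = 1 := by
        rw [show (fun _ : Fin k => ((1:ℝ):ℂ)) = fun _ => (1:ℂ) by norm_num, diagonal_one]
      rw [h0, Matrix.mul_one, hVV]
    have husum : star u ⬝ᵥ u = ((∑ i, normSq (z i) : ℝ) : ℂ) := by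
      have h1 := quad_unitary_diag V (fun _ => (1:ℝ)) u
      rw [hVDV, one_mulVec] at h1
      simpa using h1
    have hPu : star u ⬝ᵥ u = star x ⬝ᵥ P *ᵥ x := by
      conv_lhs => rw [hstaru, ← dotProduct_mulVec, hudef, mulVec_mulVec, hP2]
    have hPsum : star x ⬝ᵥ P *ᵥ x = ((∑ i, ind i * normSq (y i) : ℝ) : ℂ) := by
      rw [hPdef, quad_unitary_diag]
    have hBsum : star x ⬝ᵥ B *ᵥ x = ((∑ i, μ i * normSq (y i) : ℝ) : ℂ) := by
      conv_lhs => rw [hspecB]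
      rw [quad_unitary_diag]
    have hteq : (∑ i, normSq (z i)) = ∑ i, ind i * normSq (y i) := by
      have h := husum.symm.trans (hPu.trans hPsum)
      exact_mod_cast h
    have ht0 : 0 ≤ ∑ i, ind i * normSq (y i) := by
      apply Finset.sum_nonneg
      intro i _
      apply mul_nonneg _ (normSq_nonneg _)
      by_cases h : μ i = 0 <;> simp [hinddef, h]
    have h1 : (∑ i, ν i * normSq (z i)) ≤ C * ∑ i, normSq (z i) := by
      rw [Finset.mul_sum]
      exact Finset.sum_le_sum fun i _ =>
        mul_le_mul_of_nonneg_right (hνC i) (normSq_nonneg _)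
    have h2 : δ * (∑ i, ind i * normSq (y i)) ≤ ∑ i, μ i * normSq (y i) := by
      rw [Finset.mul_sum]
      refine Finset.sum_le_sum fun i _ => ?_
      by_cases h : μ i = 0
      · simp [hinddef, h]
      · have hi : i ∈ s := Finset.mem_filter.mpr ⟨Finset.mem_univ i, h⟩
        have hle : δ ≤ μ i := Finset.inf'_le μ hi
        have : ind i = 1 := by simp [hinddef, h]
        rw [this, one_mul]
        exact mul_le_mul_of_nonneg_right hle (normSq_nonneg _)
    rw [hexp, hBsum, ← hqA, hzsum, ← Complex.ofReal_mul, ← Complex.ofReal_sub,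
      Complex.ofReal_re]
    rw [hteq] at h1
    have h3 : C/δ * (δ * (∑ i, ind i * normSq (y i))) ≤ C/δ * (∑ i, μ i * normSq (y i)) :=
      mul_le_mul_of_nonneg_left h2 (div_nonneg hC0 hδpos.le)
    have h4 : C/δ * (δ * (∑ i, ind i * normSq (y i))) = C * (∑ i, ind i * normSq (y i)) := by
      field_simp
    linarith

lemma trace_mul_psd_re_nonneg {A B : Matrix (Fin k) (Fin k) ℂ}
    (hA : A.PosSemidef) (hB : B.PosSemidef) : 0 ≤ (A * B).trace.re :=
  (Complex.le_def.mp (trace_mul_psd_nonneg hA hB)).1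

lemma ker_subset_of_range {A B : Matrix (Fin k) (Fin k) ℂ}
    (hA : A.PosSemidef) (hB : B.PosSemidef)
    (hsupp : LinearMap.range (Matrix.toLin' A) ≤ LinearMap.range (Matrix.toLin' B)) :
    ∀ x, B *ᵥ x = 0 → A *ᵥ x = 0 := by
  intro x hx
  have hmem : A *ᵥ x ∈ LinearMap.range (Matrix.toLin' B) :=
    hsupp ⟨x, Matrix.toLin'_apply _ _⟩
  obtain ⟨z, hz⟩ := hmem
  rw [Matrix.toLin'_apply] at hz
  rw [← hA.dotProduct_mulVec_zero_iff, ← hz, dotProduct_mulVec]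
  have h0 : star x ᵥ* B = 0 := by
    have h1 : star (B *ᵥ x) = star x ᵥ* Bᴴ := star_mulVec B x
    rw [hx, hB.1.eq] at h1
    simpa using h1.symm
  rw [h0, zero_dotProduct]

lemma tr_sub_smul (X ρ σ : Matrix (Fin k) (Fin k) ℂ) (r : ℝ) :
    ((X * (ρ - (r : ℂ) • σ)).trace).re = (X * ρ).trace.re - r * (X * σ).trace.re := by
  rw [Matrix.mul_sub, trace_sub, Matrix.mul_smul, trace_smul, Complex.sub_re]
  congr 1
  simp [Complex.smul_re]

lemma tr_smul_sub (X ρ σ : Matrix (Fin k) (Fin k) ℂ) (r : ℝ) :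
    ((X * ((r : ℂ) • σ - ρ)).trace).re = r * (X * σ).trace.re - (X * ρ).trace.re := by
  rw [Matrix.mul_sub, trace_sub, Matrix.mul_smul, trace_smul, Complex.sub_re]
  congr 1
  simp [Complex.smul_re]

lemma quad_sub_smul_re (ρ σ : Matrix (Fin k) (Fin k) ℂ) (r : ℝ) (x : Fin k → ℂ) :
    (star x ⬝ᵥ (ρ - (r : ℂ) • σ) *ᵥ x).re
      = (star x ⬝ᵥ ρ *ᵥ x).re - r * (star x ⬝ᵥ σ *ᵥ x).re := by
  rw [sub_mulVec, dotProduct_sub, smul_mulVec, dotProduct_smul, smul_eq_mul,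
    Complex.sub_re]
  congr 1
  simp [Complex.mul_re]

lemma quad_smul_sub_re (ρ σ : Matrix (Fin k) (Fin k) ℂ) (r : ℝ) (x : Fin k → ℂ) :
    (star x ⬝ᵥ ((r : ℂ) • σ - ρ) *ᵥ x).re
      = r * (star x ⬝ᵥ σ *ᵥ x).re - (star x ⬝ᵥ ρ *ᵥ x).re := by
  rw [sub_mulVec, dotProduct_sub, smul_mulVec, dotProduct_smul, smul_eq_mul,
    Complex.sub_re]
  congr 1
  simp [Complex.mul_re]

lemma herm_smul_real {σ : Matrix (Fin k) (Fin k) ℂ} (hσ : σ.IsHermitian) (r : ℝ) :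
    ((r : ℂ) • σ).IsHermitian := by
  unfold Matrix.IsHermitian
  rw [conjTranspose_smul, hσ.eq, Complex.star_def, Complex.conj_ofReal]

lemma psd_sub_smul_le {ρ σ : Matrix (Fin k) (Fin k) ℂ} (hρ : ρ.trace = 1)
    (hσ : σ.trace = 1) {lam : ℝ} (h : (ρ - (lam : ℂ) • σ).PosSemidef) : lam ≤ 1 := by
  have h0 := psd_trace_nonneg h
  rw [trace_sub, trace_smul, hρ, hσ] at h0
  have h1 := (Complex.le_def.mp h0).1
  simp at h1
  linarith

lemma psd_smul_sub_ge {ρ σ : Matrix (Fin k) (Fin k) ℂ} (hρ : ρ.trace = 1)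
    (hσ : σ.trace = 1) {lam : ℝ} (h : ((lam : ℂ) • σ - ρ).PosSemidef) : 1 ≤ lam := by
  have h0 := psd_trace_nonneg h
  rw [trace_sub, trace_smul, hρ, hσ] at h0
  have h1 := (Complex.le_def.mp h0).1
  simp at h1
  linarith

lemma exists_pos_of_sSup_pos {S : Set ℝ} (h : 0 < sSup S) : ∃ x ∈ S, 0 < x := by
  by_cases hne : S.Nonempty
  · obtain ⟨x, hx, h0⟩ := exists_lt_of_lt_csSup hne h
    exact ⟨x, hx, h0⟩
  · rw [Set.not_nonempty_iff_eq_empty] at hne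
    rw [hne, Real.sSup_empty] at h
    linarith

lemma infRatio_facts {ρ σ : Matrix (Fin k) (Fin k) ℂ}
    (hρ : ρ.PosSemidef) (hσ : σ.PosSemidef) (hρt : ρ.trace = 1) (hσt : σ.trace = 1) :
    0 ≤ sSup {lam : ℝ | (ρ - (lam : ℂ) • σ).PosSemidef} ∧
    sSup {lam : ℝ | (ρ - (lam : ℂ) • σ).PosSemidef} ≤ 1 ∧
    (ρ - ((sSup {lam : ℝ | (ρ - (lam : ℂ) • σ).PosSemidef} : ℝ) : ℂ) • σ).PosSemidef := by
  set S := {lam : ℝ | (ρ - (lam : ℂ) • σ).PosSemidef} with hS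
  have h0mem : (0 : ℝ) ∈ S := by
    show (ρ - ((0:ℝ) : ℂ) • σ).PosSemidef
    simpa using hρ
  have hub : ∀ lam ∈ S, lam ≤ 1 := fun lam hlam => psd_sub_smul_le hρt hσt hlam
  have hbdd : BddAbove S := ⟨1, fun lam hlam => hub lam hlam⟩
  have hm0 : 0 ≤ sSup S := le_csSup hbdd h0mem
  have hm1 : sSup S ≤ 1 := csSup_le ⟨0, h0mem⟩ hub
  refine ⟨hm0, hm1, ?_⟩
  have hH : (ρ - ((sSup S : ℝ) : ℂ) • σ).IsHermitian :=
    hρ.1.sub (herm_smul_real hσ.1 _)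
  rw [psd_iff_re hH]
  intro x
  rw [quad_sub_smul_re]
  have hr₁ : 0 ≤ (star x ⬝ᵥ ρ *ᵥ x).re := (Complex.le_def.mp (hρ.dotProduct_mulVec_nonneg x)).1
  have hr₂ : 0 ≤ (star x ⬝ᵥ σ *ᵥ x).re := (Complex.le_def.mp (hσ.dotProduct_mulVec_nonneg x)).1
  have key : ∀ lam ∈ S, lam * (star x ⬝ᵥ σ *ᵥ x).re ≤ (star x ⬝ᵥ ρ *ᵥ x).re := by
    intro lam hlam
    have h := (Complex.le_def.mp ((hlam : (ρ - (lam : ℂ) • σ).PosSemidef).dotProduct_mulVec_nonneg x)).1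
    rw [quad_sub_smul_re] at h
    simp only [Complex.zero_re] at h
    linarith
  rcases eq_or_lt_of_le hr₂ with h2 | h2
  · rw [← h2, mul_zero]
    linarith
  · have hub2 : sSup S ≤ (star x ⬝ᵥ ρ *ᵥ x).re / (star x ⬝ᵥ σ *ᵥ x).re :=
      csSup_le ⟨0, h0mem⟩ (fun lam hlam => (le_div_iff₀ h2).mpr (key lam hlam))
    have := (le_div_iff₀ h2).mp hub2
    linarith

lemma supRatio_facts {ρ σ : Matrix (Fin k) (Fin k) ℂ}
    (hρ : ρ.PosSemidef) (hσ : σ.PosSemidef) (hρt : ρ.trace = 1) (hσt : σ.trace = 1)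
    (hne : {lam : ℝ | ((lam : ℂ) • σ - ρ).PosSemidef}.Nonempty) :
    1 ≤ sInf {lam : ℝ | ((lam : ℂ) • σ - ρ).PosSemidef} ∧
    (((sInf {lam : ℝ | ((lam : ℂ) • σ - ρ).PosSemidef} : ℝ) : ℂ) • σ - ρ).PosSemidef := by
  set S := {lam : ℝ | ((lam : ℂ) • σ - ρ).PosSemidef} with hS
  have hlb : ∀ lam ∈ S, 1 ≤ lam := fun lam hlam => psd_smul_sub_ge hρt hσt hlam
  have hge : 1 ≤ sInf S := le_csInf hne hlb
  refine ⟨hge, ?_⟩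
  have hH : (((sInf S : ℝ) : ℂ) • σ - ρ).IsHermitian :=
    (herm_smul_real hσ.1 _).sub hρ.1
  rw [psd_iff_re hH]
  intro x
  rw [quad_smul_sub_re]
  have hr₁ : 0 ≤ (star x ⬝ᵥ ρ *ᵥ x).re := (Complex.le_def.mp (hρ.dotProduct_mulVec_nonneg x)).1
  have hr₂ : 0 ≤ (star x ⬝ᵥ σ *ᵥ x).re := (Complex.le_def.mp (hσ.dotProduct_mulVec_nonneg x)).1
  have key : ∀ lam ∈ S, (star x ⬝ᵥ ρ *ᵥ x).re ≤ lam * (star x ⬝ᵥ σ *ᵥ x).re := by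
    intro lam hlam
    have h := (Complex.le_def.mp ((hlam : ((lam : ℂ) • σ - ρ).PosSemidef).dotProduct_mulVec_nonneg x)).1
    rw [quad_smul_sub_re] at h
    simp only [Complex.zero_re] at h
    linarith
  rcases eq_or_lt_of_le hr₂ with h2 | h2
  · obtain ⟨lam₀, hlam₀⟩ := hne
    have h3 := key lam₀ hlam₀
    rw [← h2, mul_zero] at h3 ⊢
    linarith
  · have hlb2 : (star x ⬝ᵥ ρ *ᵥ x).re / (star x ⬝ᵥ σ *ᵥ x).re ≤ sInf S :=
      le_csInf hne (fun lam hlam => (div_le_iff₀ h2).mpr (key lam hlam))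
    have := (div_le_iff₀ h2).mp hlb2
    linarith

end PmaxHelpers

/-- `sup(A/B) = inf { λ : λB - A ≥ 0 }`, as a value in `ℝ≥0∞` (equal to `+∞` when no
`λ` satisfies `λB - A ≥ 0`). -/
noncomputable def supRatioE {k : ℕ} (A B : Matrix (Fin k) (Fin k) ℂ) : ℝ≥0∞ :=
  sInf { x : ℝ≥0∞ | ∃ lam : ℝ,
    x = ENNReal.ofReal lam ∧ ((lam : ℂ) • B - A).PosSemidef }

/-- `sup(A/B) = inf { λ : λB - A ≥ 0 }`. -/
noncomputable def supRatio {k : ℕ} (A B : Matrix (Fin k) (Fin k) ℂ) : ℝ :=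
  sInf { lam : ℝ | ((lam : ℂ) • B - A).PosSemidef }

/-- `inf(A/B) = sup { λ : A - λB ≥ 0 }`. -/
noncomputable def infRatio {k : ℕ} (A B : Matrix (Fin k) (Fin k) ℂ) : ℝ :=
  sSup { lam : ℝ | (A - (lam : ℂ) • B).PosSemidef }

/-- The optimal success probability `P_max(q)` of a probabilistic test-and-prepare
transformation with fixed ratio `q = p₁/p₂`. -/
noncomputable def Pmax {n : ℕ} (ρ₁ ρ₂ : Matrix (Fin n) (Fin n) ℂ)
    (M' m' q : ℝ) : ℝ :=
  sSup { x : ℝ | ∃ E F : Matrix (Fin n) (Fin n) ℂ,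
    E.PosSemidef ∧ F.PosSemidef ∧
    ((1 : Matrix (Fin n) (Fin n) ℂ) - (E + F)).PosSemidef ∧
    ((E + F) * ((q : ℂ) • ρ₂ - ρ₁)).trace = 0 ∧
    0 ≤ (E * (ρ₁ - ((q * M' : ℝ) : ℂ) • ρ₂)).trace.re ∧
    0 ≤ (F * (((q * m' : ℝ) : ℂ) • ρ₂ - ρ₁)).trace.re ∧
    x = ((E + F) * ρ₁).trace.re }

/-- Lemma 9 of the paper: if the optimal success probability `P_max(q)` is positive,
then `m ≤ q·m'` and `q·M' ≤ M` (i.e. `m/m' ≤ q ≤ M/M'`), where `M = sup(ρ₁/ρ₂)` may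
be `+∞`. -/
theorem Pmax_pos_implies_q_range
    {n m : ℕ} (ρ₁ ρ₂ : Matrix (Fin n) (Fin n) ℂ) (ρ₁' ρ₂' : Matrix (Fin m) (Fin m) ℂ)
    (hρ₁ : ρ₁.PosSemidef) (hρ₁tr : ρ₁.trace = 1)
    (hρ₂ : ρ₂.PosSemidef) (hρ₂tr : ρ₂.trace = 1)
    (hρ₁' : ρ₁'.PosSemidef) (hρ₁'tr : ρ₁'.trace = 1)
    (hρ₂' : ρ₂'.PosSemidef) (hρ₂'tr : ρ₂'.trace = 1)
    (hne' : ρ₁' ≠ ρ₂')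
    (hsupp' : LinearMap.range (Matrix.toLin' ρ₁') ≤ LinearMap.range (Matrix.toLin' ρ₂'))
    (M' m' : ℝ) (hM' : M' = supRatio ρ₁' ρ₂') (hm' : m' = infRatio ρ₁' ρ₂')
    (q : ℝ) (hq : 0 < q)
    (hpos : 0 < Pmax ρ₁ ρ₂ M' m' q) :
    infRatio ρ₁ ρ₂ ≤ q * m' ∧ ENNReal.ofReal (q * M') ≤ supRatioE ρ₁ ρ₂ := by
  obtain ⟨x, hxS, hxpos⟩ := exists_pos_of_sSup_pos hpos
  obtain ⟨E, F, hE, hF, hEF1, hC0, hCE, hCF, hxval⟩ := hxS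
  set a₁ := (E * ρ₁).trace.re with ha₁def
  set a₂ := (E * ρ₂).trace.re with ha₂def
  set b₁ := (F * ρ₁).trace.re with hb₁def
  set b₂ := (F * ρ₂).trace.re with hb₂def
  have ha₁ : 0 ≤ a₁ := trace_mul_psd_re_nonneg hE hρ₁
  have ha₂ : 0 ≤ a₂ := trace_mul_psd_re_nonneg hE hρ₂
  have hb₁ : 0 ≤ b₁ := trace_mul_psd_re_nonneg hF hρ₁
  have hb₂ : 0 ≤ b₂ := trace_mul_psd_re_nonneg hF hρ₂
  have hcon : (q * a₂ - a₁) + (q * b₂ - b₁) = 0 := by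
    have h := congrArg Complex.re hC0
    rw [Matrix.add_mul, Matrix.trace_add, Complex.add_re, Complex.zero_re,
      tr_smul_sub, tr_smul_sub] at h
    exact h
  have hCE' : 0 ≤ a₁ - q * M' * a₂ := by rw [tr_sub_smul] at hCE; exact hCE
  have hCF' : 0 ≤ q * m' * b₂ - b₁ := by rw [tr_smul_sub] at hCF; exact hCF
  have hxeq : x = a₁ + b₁ := by
    rw [hxval, Matrix.add_mul, Matrix.trace_add, Complex.add_re]
  -- facts about m'
  obtain ⟨hm'0, hm'le1, hm'mem⟩ := infRatio_facts hρ₁' hρ₂' hρ₁'tr hρ₂'tr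
  have hm'eq : m' = sSup {lam : ℝ | (ρ₁' - (lam : ℂ) • ρ₂').PosSemidef} := hm'
  rw [← hm'eq] at hm'0 hm'le1 hm'mem
  have hm'lt1 : m' < 1 := by
    rcases lt_or_eq_of_le hm'le1 with h | h
    · exact h
    · exfalso
      rw [h] at hm'mem
      have h1 : ρ₁' - ρ₂' = 0 := by
        apply psd_trace_zero (by simpa using hm'mem)
        rw [Matrix.trace_sub, hρ₁'tr, hρ₂'tr, sub_self]
      exact hne' (sub_eq_zero.mp h1)
  -- facts about M'
  have hSne : {lam : ℝ | ((lam : ℂ) • ρ₂' - ρ₁').PosSemidef}.Nonempty := by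
    obtain ⟨c, hc⟩ := exists_smul_sub_psd hρ₁' hρ₂'
      (ker_subset_of_range hρ₁' hρ₂' hsupp')
    exact ⟨c, hc⟩
  obtain ⟨hM'ge1, hM'mem⟩ := supRatio_facts hρ₁' hρ₂' hρ₁'tr hρ₂'tr hSne
  have hM'eq : M' = sInf {lam : ℝ | ((lam : ℂ) • ρ₂' - ρ₁').PosSemidef} := hM'
  rw [← hM'eq] at hM'ge1 hM'mem
  have hM'gt1 : 1 < M' := by
    rcases lt_or_eq_of_le hM'ge1 with h | h
    · exact h
    · exfalso
      rw [← h] at hM'mem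
      have h1 : ρ₂' - ρ₁' = 0 := by
        apply psd_trace_zero (by simpa using hM'mem)
        rw [Matrix.trace_sub, hρ₁'tr, hρ₂'tr, sub_self]
      exact hne' (sub_eq_zero.mp h1).symm
  constructor
  · -- first goal
    show sSup {lam : ℝ | (ρ₁ - (lam : ℂ) • ρ₂).PosSemidef} ≤ q * m'
    apply Real.sSup_le _ (mul_nonneg hq.le hm'0)
    intro lam hlam
    have hFq : 0 ≤ b₁ - lam * b₂ := by
      have h := trace_mul_psd_re_nonneg hF (hlam : (ρ₁ - (lam : ℂ) • ρ₂).PosSemidef)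
      rwa [tr_sub_smul] at h
    rcases eq_or_lt_of_le hb₂ with h2 | h2
    · exfalso
      rw [← h2, mul_zero] at hCF' hcon
      have hb₁0 : b₁ = 0 := le_antisymm (by linarith) hb₁
      have ha₁pos : 0 < a₁ := by
        rw [hxeq] at hxpos
        linarith
      have ha₂eq : q * a₂ = a₁ := by linarith
      have ha₂pos : 0 < a₂ := by nlinarith
      nlinarith [mul_pos (mul_pos hq ha₂pos) (sub_pos.mpr hM'gt1)]
    · have h3 : lam * b₂ ≤ (q * m') * b₂ := by linarith
      exact le_of_mul_le_mul_right h3 h2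
  · -- second goal
    show ENNReal.ofReal (q * M') ≤
      sInf { y : ℝ≥0∞ | ∃ lam : ℝ, y = ENNReal.ofReal lam ∧ ((lam : ℂ) • ρ₂ - ρ₁).PosSemidef }
    apply le_sInf
    rintro y ⟨lam, rfl, hlam⟩
    apply ENNReal.ofReal_le_ofReal
    have hEq : 0 ≤ lam * a₂ - a₁ := by
      have h := trace_mul_psd_re_nonneg hE hlam
      rwa [tr_smul_sub] at h
    rcases eq_or_lt_of_le ha₂ with h2 | h2
    · exfalso
      rw [← h2, mul_zero] at hEq hCE' hcon
      have ha₁0 : a₁ = 0 := le_antisymm (by linarith) ha₁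
      have hb₁pos : 0 < b₁ := by
        rw [hxeq] at hxpos
        linarith
      have hb₂eq : q * b₂ = b₁ := by linarith
      have h5 : q * m' * b₂ = m' * b₁ := by rw [← hb₂eq]; ring
      nlinarith [mul_pos (sub_pos.mpr hm'lt1) hb₁pos]
    · have h3 : (q * M') * a₂ ≤ lam * a₂ := by nlinarith
      exact le_of_mul_le_mul_right h3 h2
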